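/- arXiv:1605.05807 — 4 statements merged into one kernel-verified Lean document; each statement's English description precedes it below -/
import Mathlib

section
/- Let T = ⟨P, 𝒢, O⟩ be a plan-recognition theory with O = o_1,…,o_m pairwise distinct, let P' be the transformed domain, and let G ∈ 𝒢 with G' = G ∪ F_o. Then π = a_1,…,a_n is a plan for G in P that satisfies the observation sequence O under the strictly monotonic function f if and only if π' = b_1,…,b_n is a plan for G' in P', where b_i = o_{a_i} if i = f(j) for some j ∈ {1,…,m}, and b_i = a_i otherwise. -/
/-- A STRIPS planning domain: fluents `F`, actions `A`, an initial state `I`,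
and precondition/add/delete lists for each action.  A planning problem is
obtained by pairing a domain with a goal `G : Set F`. -/
structure Strips (F A : Type) where
  I : Set F
  pre : A → Set F
  add : A → Set F
  del : A → Set F

namespace Strips

variable {F A : Type}

/-- The result of applying action `a` in state `s`: `(s \ Del(a)) ∪ Add(a)`. -/
def applyA (P : Strips F A) (s : Set F) (a : A) : Set F := (s \ P.del a) ∪ P.add a

/-- `Exec P s π t`: the action sequence `π` is applicable successively from
state `s` (each action's precondition holds when it is applied) and leads to
the state `t`. -/
inductive Exec (P : Strips F A) : Set F → List A → Set F → Prop
  | nil (s : Set F) : Exec P s [] s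
  | cons {s t : Set F} {a : A} {π : List A} :
      P.pre a ⊆ s → Exec P (P.applyA s a) π t → Exec P s (a :: π) t

/-- `π` is a plan for the goal `G` in the domain `P`: it is applicable
successively from the initial state and its final state contains `G`. -/
def IsPlan (P : Strips F A) (G : Set F) (π : List A) : Prop :=
  ∃ t, Exec P P.I π t ∧ G ⊆ t

/-- The cost of a plan: the sum of the costs of its actions. -/
def planCost (c : A → ℝ) (π : List A) : ℝ := (π.map c).sum

/-- An optimal plan for `G`: a plan for `G` of minimum cost among all plans for `G`. -/
def IsOptimalPlan (P : Strips F A) (c : A → ℝ) (G : Set F) (π : List A) : Prop :=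
  P.IsPlan G π ∧ ∀ π', P.IsPlan G π' → planCost c π ≤ planCost c π'

/-- `c*_P(G)`: the optimal (minimum) cost of achieving `G` in `P`. -/
noncomputable def cstar (P : Strips F A) (c : A → ℝ) (G : Set F) : ℝ :=
  sInf (planCost c '' {π | P.IsPlan G π})

/-- An action sequence `π` satisfies the observation sequence `O` iff there is a
strictly monotonic function `f` from observation indices into action indices
such that the `f j`-th action of `π` equals the `j`-th observation. -/
def Satisfies (π O : List A) : Prop :=
  ∃ f : Fin O.length → Fin π.length, StrictMono f ∧ ∀ j, π.get (f j) = O.get j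

end Strips

/-- The transformed domain `P'` of a plan-recognition theory `⟨P, 𝒢, O⟩`:
fluents `F' = F ⊕ Fin m` (the fluent `Sum.inr j` is `p_{o_j}`), actions
`A' = A ⊕ Fin m` (the action `Sum.inr j` is the new action `o_{o_j}`),
initial state `I' = I`.  The new action `o_{o_j}` has the same precondition,
add and delete lists as the observed action `o_j = O.get j`, except that
`p_{o_j}` is added to its add list and `p_{o_{j-1}}` (for the observation
immediately preceding `o_j` in `O`, if any, i.e. when `j > 0`) is added to its
precondition. -/
def Strips.transform (P : Strips F A) (O : List A) :
    Strips (F ⊕ Fin O.length) (A ⊕ Fin O.length) where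
  I := Sum.inl '' P.I
  pre := fun x => match x with
    | Sum.inl a => Sum.inl '' P.pre a
    | Sum.inr j => Sum.inl '' P.pre (O.get j) ∪
        {p | ∃ _ : 0 < (j : ℕ), p = Sum.inr
          (⟨(j : ℕ) - 1, Nat.lt_of_le_of_lt (Nat.sub_le _ _) j.isLt⟩ : Fin O.length)}
  add := fun x => match x with
    | Sum.inl a => Sum.inl '' P.add a
    | Sum.inr j => insert (Sum.inr j) (Sum.inl '' P.add (O.get j))
  del := fun x => match x with
    | Sum.inl a => Sum.inl '' P.del a
    | Sum.inr j => Sum.inl '' P.del (O.get j)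

/-- The set `F_o` of new fluents `p_a`, `a ∈ O`, of the transformed domain. -/
def obsFluents {F : Type} (O : List A) : Set (F ⊕ Fin O.length) := Set.range Sum.inr

/-- The transformed goal `G' = G ∪ F_o`. -/
def goalTransform {F : Type} (O : List A) (G : Set F) : Set (F ⊕ Fin O.length) :=
  Sum.inl '' G ∪ Set.range Sum.inr

/-- The cost function of the transformed domain: `c(o_a) = c(a)`. -/
def costTransform (c : A → ℝ) (O : List A) : A ⊕ Fin O.length → ℝ :=
  Sum.elim c (fun j => c (O.get j))

namespace PRaux
open Strips

variable {F A : Type}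

/-- Shape of the intermediate states of the transformed domain. -/
def T {m : ℕ} (k : ℕ) (s : Set F) : Set (F ⊕ Fin m) :=
  Sum.inl '' s ∪ Sum.inr '' {j : Fin m | (j : ℕ) < k}

lemma inl_mem_T {m k : ℕ} {s : Set F} {x : F} :
    Sum.inl x ∈ T (m := m) k s ↔ x ∈ s := by
  simp [T]

lemma inr_mem_T {m k : ℕ} {s : Set F} {j : Fin m} :
    Sum.inr j ∈ T (m := m) k s ↔ (j : ℕ) < k := by
  simp [T]

lemma inl_subset_T {m k : ℕ} {u s : Set F} :
    Sum.inl '' u ⊆ T (m := m) k s ↔ u ⊆ s := by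
  constructor
  · intro h x hx
    exact inl_mem_T.1 (h ⟨x, hx, rfl⟩)
  · rintro h _ ⟨x, hx, rfl⟩
    exact inl_mem_T.2 (h hx)

lemma T_zero {m : ℕ} (s : Set F) : T (m := m) 0 s = Sum.inl '' s := by
  simp [T]

lemma apply_inl {m k : ℕ} (s d ad : Set F) :
    (T (m := m) k s \ Sum.inl '' d) ∪ Sum.inl '' ad = T k ((s \ d) ∪ ad) := by
  ext x
  rcases x with x | j
  · simp [T]
  · simp [T]

lemma T_succ {m k : ℕ} (hk : k < m) (s : Set F) :
    T (m := m) (k + 1) s = insert (Sum.inr ⟨k, hk⟩) (T k s) := by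
  ext x
  rcases x with x | j
  · simp [T]
  · simp [T]
    constructor
    · intro h
      rcases Nat.lt_or_ge (j : ℕ) k with h' | h'
      · exact Or.inr h'
      · exact Or.inl (Fin.ext (show (j : ℕ) = k by omega))
    · rintro (rfl | h)
      · exact Nat.le_refl k
      · omega

lemma apply_inr {m k : ℕ} (hk : k < m) (s d ad : Set F) :
    (T (m := m) k s \ Sum.inl '' d) ∪ insert (Sum.inr ⟨k, hk⟩) (Sum.inl '' ad) =
      T (k + 1) ((s \ d) ∪ ad) := by
  rw [Set.union_insert, apply_inl, T_succ hk]

lemma exec_nil_iff {P : Strips F A} {s t : Set F} : Exec P s [] t ↔ t = s :=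
  ⟨fun h => by cases h; rfl, fun h => by rw [h]; exact Exec.nil s⟩

lemma exec_cons_iff {P : Strips F A} {s t : Set F} {a : A} {π : List A} :
    Exec P s (a :: π) t ↔ P.pre a ⊆ s ∧ Exec P (P.applyA s a) π t := by
  constructor
  · intro h; cases h with | cons h1 h2 => exact ⟨h1, h2⟩
  · rintro ⟨h1, h2⟩; exact Exec.cons h1 h2

lemma key (P : Strips F A) (O : List A)
    (π : List A) (f : Fin O.length → Fin π.length)
    (hf : StrictMono f) (hsat : ∀ j, π.get (f j) = O.get j)
    (π' : List (A ⊕ Fin O.length)) (hlen : π'.length = π.length)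
    (hin : ∀ j : Fin O.length, π'.get (Fin.cast hlen.symm (f j)) = Sum.inr j)
    (hout : ∀ i : Fin π.length, (∀ j, f j ≠ i) →
      π'.get (Fin.cast hlen.symm i) = Sum.inl (π.get i)) :
    ∀ d i k (s : Set F), i + d = π.length → k ≤ O.length →
      (∀ j : Fin O.length, ((f j : ℕ) < i ↔ (j : ℕ) < k)) →
      ((∀ t, Exec P s (π.drop i) t →
          Exec (P.transform O) (T k s) (π'.drop i) (T O.length t)) ∧
       (∀ t', Exec (P.transform O) (T k s) (π'.drop i) t' →
          ∃ t, t' = T O.length t ∧ Exec P s (π.drop i) t)) := by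
  intro d
  induction d with
  | zero =>
    intro i k s hi hk hinv
    simp only [Nat.add_zero] at hi
    have hkm : k = O.length := by
      rcases Nat.lt_or_ge k O.length with h | h
      · exfalso
        have := (hinv ⟨k, h⟩).1 (by simpa [hi] using (f ⟨k, h⟩).isLt)
        simp at this
      · omega
    subst hkm
    have h1 : π.drop i = [] := by rw [hi, List.drop_length]
    have h2 : π'.drop i = [] := by rw [← hlen] at hi; rw [hi, List.drop_length]
    rw [h1, h2]
    constructor
    · intro t ht
      rw [exec_nil_iff] at ht
      subst ht
      exact Exec.nil _
    · intro t' ht'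
      rw [exec_nil_iff] at ht'
      exact ⟨s, ht', Exec.nil _⟩
  | succ d ih =>
    intro i k s hi hk hinv
    have hi' : i < π.length := by omega
    have hi'' : i < π'.length := by omega
    have hdropπ : π.drop i = π[i] :: π.drop (i + 1) := List.drop_eq_getElem_cons hi'
    have hdropπ' : π'.drop i = π'[i] :: π'.drop (i + 1) := List.drop_eq_getElem_cons hi''
    by_cases hex : ∃ j : Fin O.length, ((f j : ℕ) = i)
    · -- observation position
      obtain ⟨j, hj⟩ := hex
      have hjge : k ≤ (j : ℕ) := by
        rcases Nat.lt_or_ge (j : ℕ) k with h | h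
        · exact absurd ((hinv j).2 h) (by omega)
        · exact h
      have hkm : k < O.length := lt_of_le_of_lt hjge j.isLt
      have hfk : ((f (⟨k, hkm⟩ : Fin O.length) : ℕ)) = i := by
        have h1 : ¬ ((f (⟨k, hkm⟩ : Fin O.length) : ℕ) < i) := fun h => by
          have := (hinv ⟨k, hkm⟩).1 h; simp at this
        have h2 : f (⟨k, hkm⟩ : Fin O.length) ≤ f j := hf.monotone hjge
        have h3 : ((f j : ℕ)) = i := hj
        have h4 : ((f (⟨k, hkm⟩ : Fin O.length) : ℕ)) ≤ ((f j : ℕ)) := h2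
        omega
      have hπi : π[i] = O.get ⟨k, hkm⟩ := by
        have h0 := hsat ⟨k, hkm⟩
        have h1 : π.get (f ⟨k, hkm⟩) = π[i] := by
          congr 1; exact Fin.ext hfk
        rw [h1] at h0; exact h0
      have hπ'i : π'[i] = Sum.inr ⟨k, hkm⟩ := by
        have h0 := hin ⟨k, hkm⟩
        have h1 : π'.get (Fin.cast hlen.symm (f ⟨k, hkm⟩)) = π'[i] := by
          congr 1; exact Fin.ext hfk
        rw [h1] at h0; exact h0
      have hinv' : ∀ j' : Fin O.length, ((f j' : ℕ) < i + 1 ↔ (j' : ℕ) < k + 1) := by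
        intro j'
        constructor
        · intro h
          rcases Nat.lt_or_ge (f j' : ℕ) i with h' | h'
          · exact Nat.lt_succ_of_lt ((hinv j').1 h')
          · have he1 : f j' = f ⟨k, hkm⟩ := Fin.ext (by omega)
            have he2 : j' = ⟨k, hkm⟩ := hf.injective he1
            rw [he2]
            simp
        · intro h
          rcases Nat.lt_or_ge (j' : ℕ) k with h' | h'
          · exact Nat.lt_succ_of_lt ((hinv j').2 h')
          · have he2 : j' = ⟨k, hkm⟩ := Fin.ext (by simp; omega)
            rw [he2, hfk]
            omega
      have hpre_iff : (P.transform O).pre (Sum.inr ⟨k, hkm⟩) ⊆ T (m := O.length) k s ↔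
          P.pre (O.get ⟨k, hkm⟩) ⊆ s := by
        constructor
        · intro h
          exact inl_subset_T.1 (fun x hx => h (Or.inl hx))
        · intro h x hx
          rcases hx with hx | hx
          · exact inl_subset_T.2 h hx
          · obtain ⟨hpos, rfl⟩ := hx
            apply inr_mem_T.2
            have hp : 0 < k := hpos
            show k - 1 < k
            omega
      have happly : (P.transform O).applyA (T (m := O.length) k s) (Sum.inr ⟨k, hkm⟩) =
          T (k + 1) (P.applyA s (O.get ⟨k, hkm⟩)) := by
        show (T k s \ Sum.inl '' P.del (O.get ⟨k, hkm⟩)) ∪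
            insert (Sum.inr ⟨k, hkm⟩) (Sum.inl '' P.add (O.get ⟨k, hkm⟩)) = _
        exact apply_inr hkm _ _ _
      obtain ⟨IH1, IH2⟩ := ih (i + 1) (k + 1) (P.applyA s (O.get ⟨k, hkm⟩))
        (by omega) hkm hinv'
      rw [hdropπ, hdropπ', hπi, hπ'i]
      constructor
      · intro t ht
        rw [exec_cons_iff] at ht
        obtain ⟨hp, he⟩ := ht
        refine exec_cons_iff.2 ⟨hpre_iff.2 hp, ?_⟩
        rw [happly]
        exact IH1 t he
      · intro t' ht'
        rw [exec_cons_iff] at ht'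
        obtain ⟨hp, he⟩ := ht'
        rw [happly] at he
        obtain ⟨t, rfl, he'⟩ := IH2 t' he
        exact ⟨t, rfl, exec_cons_iff.2 ⟨hpre_iff.1 hp, he'⟩⟩
    · -- non-observation position
      push_neg at hex
      have hπ'i : π'[i] = Sum.inl π[i] := by
        have := hout ⟨i, hi'⟩ (fun j h => hex j (by rw [h]))
        simpa using this
      have hinv' : ∀ j' : Fin O.length, ((f j' : ℕ) < i + 1 ↔ (j' : ℕ) < k) := by
        intro j'
        rw [← hinv j']
        have := hex j'
        omega
      have happly : (P.transform O).applyA (T (m := O.length) k s) (Sum.inl π[i]) =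
          T k (P.applyA s π[i]) := by
        show (T k s \ Sum.inl '' P.del π[i]) ∪ Sum.inl '' P.add π[i] = _
        exact apply_inl _ _ _
      obtain ⟨IH1, IH2⟩ := ih (i + 1) k (P.applyA s π[i]) (by omega) hk hinv'
      rw [hdropπ, hdropπ', hπ'i]
      constructor
      · intro t ht
        rw [exec_cons_iff] at ht
        obtain ⟨hp, he⟩ := ht
        refine exec_cons_iff.2 ⟨inl_subset_T.2 hp, ?_⟩
        rw [happly]
        exact IH1 t he
      · intro t' ht'
        rw [exec_cons_iff] at ht'
        obtain ⟨hp, he⟩ := ht'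
        rw [happly] at he
        obtain ⟨t, rfl, he'⟩ := IH2 t' he
        exact ⟨t, rfl, exec_cons_iff.2 ⟨inl_subset_T.1 hp, he'⟩⟩

end PRaux

/-- Proposition 1: let `T = ⟨P, 𝒢, O⟩` be a plan-recognition
theory (`F`, `A` finite, `O` pairwise distinct), `P' = P.transform O` the
transformed domain, `G ∈ 𝒢`, and `G' = G ∪ F_o`.  Let `π = a_1,…,a_n` be an
action sequence that satisfies `O` under the strictly monotonic function `f`
(hypotheses `hf`, `hsat`), and let `π' = b_1,…,b_n` be the sequence with
`b_i = o_{a_i}` if `i = f j` for some `j` (hypothesis `hin`), and `b_i = a_i`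
otherwise (hypothesis `hout`).  Then `π` is a plan for `G` in `P` iff `π'` is
a plan for `G'` in `P'`. -/
theorem plan_satisfying_obs_iff_transformed_plan
    {F A : Type} [Finite F] [Finite A]
    (P : Strips F A) (𝒢 : Set (Set F)) (O : List A) (hO : O.Nodup)
    (G : Set F) (hG : G ∈ 𝒢)
    (π : List A) (f : Fin O.length → Fin π.length)
    (hf : StrictMono f) (hsat : ∀ j, π.get (f j) = O.get j)
    (π' : List (A ⊕ Fin O.length)) (hlen : π'.length = π.length)
    (hin : ∀ j : Fin O.length, π'.get (Fin.cast hlen.symm (f j)) = Sum.inr j)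
    (hout : ∀ i : Fin π.length, (∀ j, f j ≠ i) →
      π'.get (Fin.cast hlen.symm i) = Sum.inl (π.get i)) :
    P.IsPlan G π ↔ (P.transform O).IsPlan (goalTransform O G) π' := by
  obtain ⟨K1, K2⟩ := PRaux.key P O π f hf hsat π' hlen hin hout π.length 0 0 P.I
    (by simp) (Nat.zero_le _) (fun j => by omega)
  simp only [List.drop_zero] at K1 K2
  have hI : (P.transform O).I = PRaux.T (m := O.length) 0 P.I := (PRaux.T_zero P.I).symm
  constructor
  · rintro ⟨t, he, hGt⟩
    refine ⟨PRaux.T O.length t, ?_, ?_⟩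
    · rw [hI]
      exact K1 t he
    · rintro x (hx | hx)
      · obtain ⟨y, hy, rfl⟩ := hx
        exact PRaux.inl_mem_T.2 (hGt hy)
      · obtain ⟨j, rfl⟩ := hx
        exact PRaux.inr_mem_T.2 j.isLt
  · rintro ⟨t', he', hGt'⟩
    rw [hI] at he'
    obtain ⟨t, rfl, he⟩ := K2 t' he'
    refine ⟨t, he, fun x hx => ?_⟩
    exact PRaux.inl_mem_T.1 (hGt' (Or.inl ⟨x, hx, rfl⟩))
end

section
/- Let T = ⟨P, 𝒢, O⟩ be a plan-recognition theory with O = o_1,…,o_m pairwise distinct, and let P' be the transformed domain. In every plan π' for the goal G' = G ∪ F_o in P', each of the new actions o_{o_1},…,o_{o_m} occurs, and for every j < k, every occurrence of o_{o_k} comes after some occurrence of o_{o_j}; in particular the actions o_{o_1},…,o_{o_m} occur in π' in the order of O. -/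
section Aux
variable {F A : Type} {P : Strips F A} {O : List A}

lemma mem_add_inr {x : A ⊕ Fin O.length} {m : Fin O.length}
    (h : Sum.inr m ∈ (P.transform O).add x) : x = Sum.inr m := by
  cases x with
  | inl a => simp [Strips.transform] at h
  | inr j =>
    simp [Strips.transform] at h
    simp [h]

lemma exec_append {s t : Set (F ⊕ Fin O.length)} {l₁ l₂ : List (A ⊕ Fin O.length)}
    (h : (P.transform O).Exec s (l₁ ++ l₂) t) :
    ∃ u, (P.transform O).Exec s l₁ u ∧ (P.transform O).Exec u l₂ t := by
  induction l₁ generalizing s with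
  | nil => exact ⟨s, Strips.Exec.nil s, h⟩
  | cons a l ih =>
    cases h with
    | cons hpre hrest =>
      obtain ⟨u, h1, h2⟩ := ih hrest
      exact ⟨u, Strips.Exec.cons hpre h1, h2⟩

lemma exec_inr_source {s t : Set (F ⊕ Fin O.length)} {π : List (A ⊕ Fin O.length)}
    (h : (P.transform O).Exec s π t) (m : Fin O.length) (hm : Sum.inr m ∈ t) :
    Sum.inr m ∈ s ∨ Sum.inr m ∈ π := by
  induction h with
  | nil => exact Or.inl hm
  | @cons s' t' a π hpre hrest ih =>
    rcases ih hm with h' | h'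
    · rcases h' with h' | h'
      · exact Or.inl h'.1
      · exact Or.inr (by rw [mem_add_inr h']; exact List.mem_cons_self)
    · exact Or.inr (List.mem_cons_of_mem _ h')

lemma inr_not_mem_I (m : Fin O.length) : Sum.inr m ∉ (P.transform O).I := by
  simp [Strips.transform]

lemma key (k : ℕ) : ∀ (hk : k < O.length) (l₁ l₂ : List (A ⊕ Fin O.length)) (t : Set _),
    (P.transform O).Exec (P.transform O).I (l₁ ++ Sum.inr ⟨k, hk⟩ :: l₂) t →
    ∀ j : Fin O.length, (j : ℕ) < k → Sum.inr j ∈ l₁ := by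
  induction k using Nat.strong_induction_on with
  | _ k ih =>
    intro hk l₁ l₂ t hexec j hj
    obtain ⟨u, h1, h2⟩ := exec_append hexec
    cases h2 with
    | cons hpre _ =>
      have hk0 : 0 < k := Nat.pos_of_ne_zero (by rintro rfl; omega)
      have hmem : (Sum.inr ⟨k - 1, by omega⟩ : F ⊕ Fin O.length) ∈ u := by
        apply hpre
        exact Or.inr ⟨hk0, rfl⟩
      have := exec_inr_source h1 _ hmem
      rcases this with h' | h'
      · exact absurd h' (inr_not_mem_I _)
      · by_cases hjk : (j : ℕ) = k - 1
        · have : j = ⟨k - 1, by omega⟩ := Fin.ext hjk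
          rwa [this]
        · obtain ⟨m₁, m₂, rfl⟩ := List.append_of_mem h'
          have hexec' : (P.transform O).Exec (P.transform O).I
              (m₁ ++ Sum.inr ⟨k - 1, by omega⟩ :: (m₂ ++ Sum.inr ⟨k, hk⟩ :: l₂)) t := by
            simpa using hexec
          have := ih (k - 1) (by omega) (by omega) m₁ _ t hexec' j (by omega)
          exact List.mem_append_left _ this

end Aux

/-- let `T = ⟨P, 𝒢, O⟩` be a plan-recognition theory with `O`
pairwise distinct and `P' = P.transform O` the transformed domain.  In every
plan `π'` for the goal `G' = G ∪ F_o` in `P'`, each new action `o_{o_j}`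
(i.e. `Sum.inr j`) occurs, and for `j < k` every occurrence of `o_{o_k}`
comes after some occurrence of `o_{o_j}`; in particular the new actions occur
in `π'` in the order of `O`. -/
theorem transformed_plan_contains_obs_actions_in_order
    {F A : Type} [Finite F] [Finite A]
    (P : Strips F A) (𝒢 : Set (Set F)) (O : List A) (hO : O.Nodup)
    (G : Set F) (hG : G ∈ 𝒢)
    (π' : List (A ⊕ Fin O.length))
    (hπ' : (P.transform O).IsPlan (goalTransform O G) π') :
    (∀ j : Fin O.length, Sum.inr j ∈ π') ∧
    (∀ j k : Fin O.length, j < k →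
      ∀ i₂ : Fin π'.length, π'.get i₂ = Sum.inr k →
        ∃ i₁ : Fin π'.length, i₁ < i₂ ∧ π'.get i₁ = Sum.inr j) := by
  obtain ⟨t, hexec, hgoal⟩ := hπ'
  constructor
  · intro j
    have : (Sum.inr j : F ⊕ Fin O.length) ∈ t := hgoal (Or.inr ⟨j, rfl⟩)
    rcases exec_inr_source hexec j this with h | h
    · exact absurd h (inr_not_mem_I _)
    · exact h
  · intro j k hjk i₂ hget
    have hsplit : π' = π'.take i₂ ++ Sum.inr k :: π'.drop (i₂ + 1) := by
      conv_lhs => rw [← List.take_append_drop (i₂ : ℕ) π']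
      congr 1
      rw [List.drop_eq_getElem_cons i₂.isLt]
      simp [← hget, List.get_eq_getElem]
    rw [hsplit] at hexec
    have hkk : k = ⟨(k : ℕ), k.isLt⟩ := rfl
    rw [hkk] at hexec
    have hmem : Sum.inr j ∈ π'.take i₂ :=
      key (k : ℕ) k.isLt _ _ t hexec j hjk
    obtain ⟨n, hn⟩ := List.mem_iff_get.mp hmem
    have hlen : (π'.take (i₂ : ℕ)).length = min (i₂ : ℕ) π'.length := List.length_take
    have hn' : (n : ℕ) < (i₂ : ℕ) := by
      have := n.isLt; omega
    refine ⟨⟨n, lt_trans hn' i₂.isLt⟩, hn', ?_⟩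
    have heq : (π'.take (i₂ : ℕ)).get n = π'[(n : ℕ)] := by
      simp [List.get_eq_getElem, List.getElem_take]
    rw [heq] at hn
    simpa [List.get_eq_getElem] using hn
end

section
/- Let T = ⟨P, 𝒢, O⟩ be a plan-recognition theory with O pairwise distinct, and let P' be the transformed domain with cost c(o_a) = c(a) for each new action. If π' is a plan for G' = G ∪ F_o in P', then the action sequence π obtained from π' by replacing every occurrence of a new action o_a by the original action a is a plan for G in P that satisfies the observation sequence O, and c(π) = c(π'). -/
namespace PRAux

variable {F A : Type} (P : Strips F A) (O : List A)

/-- The projection from transformed actions back to original actions. -/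
def g (O : List A) : A ⊕ Fin O.length → A := Sum.elim id (fun j => O.get j)

lemma proj_applyA (s : Set (F ⊕ Fin O.length)) (x : A ⊕ Fin O.length) :
    {f | Sum.inl f ∈ (P.transform O).applyA s x} =
      P.applyA {f | Sum.inl f ∈ s} (g O x) := by
  cases x with
  | inl a => ext f; simp [Strips.applyA, Strips.transform, g]
  | inr j => ext f; simp [Strips.applyA, Strips.transform, g]

lemma proj_exec {s t : Set (F ⊕ Fin O.length)} {π' : List (A ⊕ Fin O.length)}
    (h : Strips.Exec (P.transform O) s π' t) :
    Strips.Exec P {f | Sum.inl f ∈ s} (π'.map (g O)) {f | Sum.inl f ∈ t} := by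
  induction h with
  | nil s => exact Strips.Exec.nil _
  | @cons s t a π'' hpre hex ih =>
    rw [proj_applyA] at ih
    refine Strips.Exec.cons ?_ ih
    cases a with
    | inl a =>
      intro f hf
      exact hpre (show Sum.inl f ∈ Sum.inl '' P.pre a from ⟨f, hf, rfl⟩)
    | inr j =>
      intro f hf
      exact hpre (Or.inl ⟨f, hf, rfl⟩)

lemma inr_mem_of_exec {s t : Set (F ⊕ Fin O.length)} {π' : List (A ⊕ Fin O.length)}
    (h : Strips.Exec (P.transform O) s π' t) (j : Fin O.length) (ht : Sum.inr j ∈ t) :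
    Sum.inr j ∈ s ∨ Sum.inr j ∈ π' := by
  induction h with
  | nil => exact Or.inl ht
  | @cons s t a π'' hpre hex ih =>
    rcases ih ht with h1 | h2
    · rcases h1 with ⟨hs, -⟩ | hadd
      · exact Or.inl hs
      · cases a with
        | inl a => simp [Strips.transform] at hadd
        | inr k =>
          have : j = k := by
            rcases hadd with h' | h'
            · exact Sum.inr.inj h'
            · simp at h'
          exact Or.inr (this ▸ List.mem_cons_self)
    · exact Or.inr (List.mem_cons_of_mem _ h2)

lemma pred_before {s t : Set (F ⊕ Fin O.length)} {π' : List (A ⊕ Fin O.length)}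
    (h : Strips.Exec (P.transform O) s π' t) :
    ∀ (l₁ l₂ : List (A ⊕ Fin O.length)) (k : Fin O.length),
      π' = l₁ ++ Sum.inr k :: l₂ → (k : ℕ) ≠ 0 →
      Sum.inr (⟨(k : ℕ) - 1, Nat.lt_of_le_of_lt (Nat.sub_le _ _) k.isLt⟩ : Fin O.length) ∈ s ∨
      Sum.inr (⟨(k : ℕ) - 1, Nat.lt_of_le_of_lt (Nat.sub_le _ _) k.isLt⟩ : Fin O.length) ∈ l₁ := by
  induction h with
  | nil => intro l₁ l₂ k hk _; exact absurd hk (by simp)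
  | @cons s t a π'' hpre hex ih =>
    intro l₁ l₂ k hk hk0
    cases l₁ with
    | nil =>
      simp only [List.nil_append, List.cons.injEq] at hk
      refine Or.inl (hpre ?_)
      rw [hk.1]
      exact Or.inr ⟨Nat.pos_of_ne_zero hk0, rfl⟩
    | cons b l₁' =>
      simp only [List.cons_append, List.cons.injEq] at hk
      obtain ⟨rfl, hk2⟩ := hk
      rcases ih l₁' l₂ k hk2 hk0 with h1 | h2
      · rcases h1 with ⟨hs, -⟩ | hadd
        · exact Or.inl hs
        · cases a with
          | inl a => simp [Strips.transform] at hadd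
          | inr k' =>
            have : (⟨(k : ℕ) - 1, Nat.lt_of_le_of_lt (Nat.sub_le _ _) k.isLt⟩ : Fin O.length)
                = k' := by
              rcases hadd with h' | h'
              · exact Sum.inr.inj h'
              · simp at h'
            exact Or.inr (by rw [this]; exact List.mem_cons_self)
      · exact Or.inr (List.mem_cons_of_mem _ h2)

lemma indexOf_lt_of_mem_take {α : Type*} [DecidableEq α] :
    ∀ (l : List α) (n : ℕ) (x : α), x ∈ l.take n → l.idxOf x < n := by
  intro l
  induction l with
  | nil => simp
  | cons a l ih =>
    intro n x hx
    cases n with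
    | zero => simp at hx
    | succ n =>
      rw [List.take_succ_cons] at hx
      by_cases hxa : x = a
      · subst hxa
        rw [List.idxOf_cons_self]
        exact Nat.succ_pos n
      · have hx' : x ∈ l.take n := by
          rcases List.mem_cons.mp hx with h | h
          · exact absurd h hxa
          · exact h
        rw [List.idxOf_cons_ne _ (fun h => hxa h.symm)]
        exact Nat.succ_lt_succ (ih n x hx')

end PRAux

/-- let `T = ⟨P, 𝒢, O⟩` be a plan-recognition theory with `O`
pairwise distinct, and `P' = P.transform O` the transformed domain with cost
`c(o_a) = c(a)` (i.e. `costTransform c O`).  If `π'` is a plan for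
`G' = G ∪ F_o` in `P'`, then the sequence `π` obtained from `π'` by replacing
every occurrence of a new action `o_a` by the original action `a` is a plan
for `G` in `P` that satisfies the observation sequence `O`, and
`c(π) = c(π')`. -/
theorem transformed_plan_projects_to_satisfying_plan
    {F A : Type} [Finite F] [Finite A]
    (P : Strips F A) (𝒢 : Set (Set F)) (O : List A) (hO : O.Nodup)
    (c : A → ℝ) (hc : ∀ a, 0 ≤ c a)
    (G : Set F) (hG : G ∈ 𝒢)
    (π' : List (A ⊕ Fin O.length))
    (hπ' : (P.transform O).IsPlan (goalTransform O G) π')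
    (π : List A) (hπ : π = π'.map (Sum.elim id (fun j => O.get j))) :
    P.IsPlan G π ∧ Strips.Satisfies π O ∧
      Strips.planCost c π = Strips.planCost (costTransform c O) π' := by
  classical
  obtain ⟨t, hex, hgoal⟩ := hπ'
  -- projection of the execution
  have hIproj : {f | Sum.inl f ∈ (P.transform O).I} = P.I := by
    ext f; simp [Strips.transform]
  have hexec : Strips.Exec P P.I π {f | Sum.inl f ∈ t} := by
    have := PRAux.proj_exec P O hex
    rw [hIproj] at this
    rwa [hπ]
  have hplan : P.IsPlan G π := by
    refine ⟨_, hexec, ?_⟩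
    intro f hf
    exact hgoal (Or.inl ⟨f, hf, rfl⟩)
  refine ⟨hplan, ?_, ?_⟩
  · -- Satisfies
    have hlen : π.length = π'.length := by rw [hπ]; exact List.length_map _
    -- every observation fluent is in the final state, hence every new action occurs
    have hmem : ∀ j : Fin O.length, Sum.inr j ∈ π' := by
      intro j
      have ht : (Sum.inr j : F ⊕ Fin O.length) ∈ t := hgoal (Or.inr ⟨j, rfl⟩)
      rcases PRAux.inr_mem_of_exec P O hex j ht with h | h
      · exact absurd h (by simp [Strips.transform])
      · exact h
    letI : DecidableEq (A ⊕ Fin O.length) := Classical.decEq _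
    letI : BEq (A ⊕ Fin O.length) := instBEqOfDecidableEq
    have hidxlt : ∀ j : Fin O.length, List.idxOf (Sum.inr j) π' < π'.length :=
      fun j => List.idxOf_lt_length_iff.2 (hmem j)
    have hget : ∀ j, π'.get ⟨List.idxOf (Sum.inr j) π', hidxlt j⟩ = Sum.inr j :=
      fun j => List.idxOf_get _
    -- ordering: the first occurrence of `o_{j-1}` precedes that of `o_j`
    have hstep : ∀ k : Fin O.length, (k : ℕ) ≠ 0 →
        List.idxOf (Sum.inr
          (⟨(k : ℕ) - 1, Nat.lt_of_le_of_lt (Nat.sub_le _ _) k.isLt⟩ : Fin O.length)) π' <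
          List.idxOf (Sum.inr k) π' := by
      intro k hk
      have hdecomp : π' = π'.take (List.idxOf (Sum.inr k) π') ++
          Sum.inr k :: π'.drop (List.idxOf (Sum.inr k) π' + 1) := by
        conv_lhs => rw [← List.take_append_drop (List.idxOf (Sum.inr k) π') π']
        congr 1
        rw [List.drop_eq_getElem_cons (hidxlt k)]
        congr 1
        have := hget k
        simpa [List.get_eq_getElem] using this
      rcases PRAux.pred_before P O hex _ _ k hdecomp hk with h | h
      · exact absurd h (by simp [Strips.transform])
      · exact PRAux.indexOf_lt_of_mem_take _ _ _ h
    have hmono : ∀ (b : ℕ) (hb : b < O.length) (a : ℕ) (ha : a < b),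
        List.idxOf (Sum.inr (⟨a, ha.trans hb⟩ : Fin O.length)) π' <
          List.idxOf (Sum.inr (⟨b, hb⟩ : Fin O.length)) π' := by
      intro b
      induction b with
      | zero => intro _ a ha; omega
      | succ b ihb =>
        intro hb a ha
        have hstep' : List.idxOf (Sum.inr (⟨b, Nat.lt_of_succ_lt hb⟩ : Fin O.length)) π' <
            List.idxOf (Sum.inr (⟨b + 1, hb⟩ : Fin O.length)) π' := by
          simpa using hstep ⟨b + 1, hb⟩ (Nat.succ_ne_zero b)
        rcases Nat.lt_succ_iff_lt_or_eq.mp ha with h | h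
        · exact (ihb (Nat.lt_of_succ_lt hb) a h).trans hstep'
        · subst h; exact hstep'
    refine ⟨fun j => ⟨List.idxOf (Sum.inr j) π', by rw [hlen]; exact hidxlt j⟩, ?_, ?_⟩
    · intro j1 j2 hlt
      show List.idxOf (Sum.inr j1) π' < List.idxOf (Sum.inr j2) π'
      have := hmono (j2 : ℕ) j2.isLt (j1 : ℕ) hlt
      simpa using this
    · intro j
      have h1 : π.get ⟨List.idxOf (Sum.inr j) π', by rw [hlen]; exact hidxlt j⟩
          = Sum.elim id (fun j => O.get j) (π'.get ⟨List.idxOf (Sum.inr j) π', hidxlt j⟩) := by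
        simp only [hπ, List.get_eq_getElem, List.getElem_map]
      rw [h1, hget j]
      rfl
  · -- cost
    rw [hπ]
    simp only [Strips.planCost, List.map_map]
    congr 1
    apply List.map_congr_left
    intro x _
    cases x with
    | inl a => rfl
    | inr j => rfl
end

section
/- Let T = ⟨P, 𝒢, O⟩ be a plan-recognition theory with O pairwise distinct, P' the transformed domain with c(o_a) = c(a), and G ∈ 𝒢. Then π is an optimal plan for G in P that satisfies the observation sequence O if and only if the corresponding sequence π' (obtained by replacing a_{f(j)} with o_{a_{f(j)}} as in the transformation) is simultaneously an optimal plan for the goal G in P' and an optimal plan for the goal G' = G ∪ F_o in P'. -/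
section Aux

variable {F A : Type}

lemma preimage_applyA_inl (P : Strips F A) (O : List A)
    (s : Set (F ⊕ Fin O.length)) (x : A ⊕ Fin O.length) :
    Sum.inl ⁻¹' ((P.transform O).applyA s x) =
      P.applyA (Sum.inl ⁻¹' s) (Sum.elim id O.get x) := by
  cases x with
  | inl a =>
      ext p
      simp [Strips.applyA, Strips.transform, Set.mem_image]
  | inr j =>
      ext p
      simp [Strips.applyA, Strips.transform, Set.mem_image]

lemma exec_proj (P : Strips F A) (O : List A)
    {s t : Set (F ⊕ Fin O.length)} {ρ : List (A ⊕ Fin O.length)}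
    (h : Strips.Exec (P.transform O) s ρ t) :
    Strips.Exec P (Sum.inl ⁻¹' s) (ρ.map (Sum.elim id O.get)) (Sum.inl ⁻¹' t) := by
  induction h with
  | nil s => exact Strips.Exec.nil _
  | @cons s t x ρ' hpre _ ih =>
      refine Strips.Exec.cons ?_ ?_
      · cases x with
        | inl a =>
            intro p hp
            exact hpre (⟨p, hp, rfl⟩ : Sum.inl p ∈ Sum.inl '' P.pre a)
        | inr j =>
            intro p hp
            exact hpre (Or.inl ⟨p, hp, rfl⟩)
      · rwa [preimage_applyA_inl] at ih

lemma exec_lift (P : Strips F A) (O : List A)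
    {s t : Set F} {ρ : List A} (h : Strips.Exec P s ρ t) :
    Strips.Exec (P.transform O) (Sum.inl '' s) (ρ.map Sum.inl) (Sum.inl '' t) := by
  induction h with
  | nil s => exact Strips.Exec.nil _
  | @cons s t a ρ' hpre _ ih =>
      refine Strips.Exec.cons (Set.image_mono hpre) ?_
      have : (P.transform O).applyA (Sum.inl '' s) (Sum.inl a) =
          Sum.inl '' (P.applyA s a) := by
        ext x
        cases x with
        | inl p => simp [Strips.applyA, Strips.transform]
        | inr j => simp [Strips.applyA, Strips.transform]
      rwa [this]

end Aux
section Aux2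

variable {F A : Type}

lemma cost_proj (c : A → ℝ) (O : List A) (ρ : List (A ⊕ Fin O.length)) :
    Strips.planCost (costTransform c O) ρ =
      Strips.planCost c (ρ.map (Sum.elim id O.get)) := by
  unfold Strips.planCost
  rw [List.map_map]
  congr 1
  apply List.map_congr_left
  intro x _
  cases x <;> rfl

lemma cost_lift (c : A → ℝ) (O : List A) (ρ : List A) :
    Strips.planCost (costTransform c O) (ρ.map Sum.inl) = Strips.planCost c ρ := by
  unfold Strips.planCost
  rw [List.map_map]
  rfl

lemma map_proj_eq {O : List A} {π : List A}
    (f : Fin O.length → Fin π.length)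
    (hsat : ∀ j, π.get (f j) = O.get j)
    {π' : List (A ⊕ Fin O.length)} (hlen : π'.length = π.length)
    (hin : ∀ j : Fin O.length, π'.get (Fin.cast hlen.symm (f j)) = Sum.inr j)
    (hout : ∀ i : Fin π.length, (∀ j, f j ≠ i) →
      π'.get (Fin.cast hlen.symm i) = Sum.inl (π.get i)) :
    π'.map (Sum.elim id O.get) = π := by
  apply List.ext_get (by simp [hlen])
  intro i h1 h2
  simp only [List.get_eq_getElem, List.getElem_map]
  by_cases hj : ∃ j, f j = ⟨i, h2⟩
  · obtain ⟨j, hfj⟩ := hj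
    have hg : π'[i]'(by simpa [hlen] using h2) = Sum.inr j := by
      have := hin j; rw [hfj] at this
      simpa [List.get_eq_getElem] using this
    rw [hg]
    have := hsat j; rw [hfj] at this
    simpa [List.get_eq_getElem] using this.symm
  · push_neg at hj
    have := hout ⟨i, h2⟩ hj
    have hg : π'[i]'(by simpa [hlen] using h2) = Sum.inl (π[i]) := by
      simpa [List.get_eq_getElem] using this
    rw [hg]
    rfl

end Aux2
section Aux3

variable {F A : Type}

lemma exec_key (P : Strips F A) (O : List A)
    (π : List A) (f : Fin O.length → Fin π.length) (hf : StrictMono f)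
    (hsat : ∀ j, π.get (f j) = O.get j)
    (π' : List (A ⊕ Fin O.length)) (hlen : π'.length = π.length)
    (hin : ∀ j : Fin O.length, π'.get (Fin.cast hlen.symm (f j)) = Sum.inr j)
    (hout : ∀ i : Fin π.length, (∀ j, f j ≠ i) →
      π'.get (Fin.cast hlen.symm i) = Sum.inl (π.get i)) :
    ∀ n k (s t : Set F), π.length - k = n → Strips.Exec P s (π.drop k) t →
      Strips.Exec (P.transform O)
        (Sum.inl '' s ∪ {x | ∃ j, (f j : ℕ) < k ∧ x = Sum.inr j})
        (π'.drop k)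
        (Sum.inl '' t ∪ Set.range Sum.inr) := by
  intro n
  induction n with
  | zero =>
      intro k s t hk hexec
      have hkπ : π.length ≤ k := Nat.le_of_sub_eq_zero hk
      rw [List.drop_eq_nil_of_le hkπ] at hexec
      have hst : s = t := by cases hexec; rfl
      have hdrop' : π'.drop k = [] := List.drop_eq_nil_of_le (by omega)
      rw [hdrop']
      have hset : {x : F ⊕ Fin O.length | ∃ j, (f j : ℕ) < k ∧ x = Sum.inr j} =
          Set.range Sum.inr := by
        ext x
        constructor
        · rintro ⟨j, _, rfl⟩; exact ⟨j, rfl⟩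
        · rintro ⟨j, rfl⟩; exact ⟨j, lt_of_lt_of_le (f j).isLt hkπ, rfl⟩
      rw [hset, hst]
      exact Strips.Exec.nil _
  | succ n ih =>
      intro k s t hk hexec
      have hkπ : k < π.length := by omega
      have hkπ' : k < π'.length := by omega
      have hd : π.drop k = π[k] :: π.drop (k + 1) := List.drop_eq_getElem_cons hkπ
      rw [hd] at hexec
      cases hexec with
      | cons hpre htail =>
        have hd' : π'.drop k = π'[k] :: π'.drop (k + 1) := List.drop_eq_getElem_cons hkπ'
        rw [hd']
        by_cases hj : ∃ j, f j = ⟨k, hkπ⟩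
        · obtain ⟨j, hfj⟩ := hj
          have hg : π'[k] = Sum.inr j := by
            have := hin j; rw [hfj] at this
            simpa [List.get_eq_getElem] using this
          have hOj : O[(j : ℕ)] = π[k] := by
            have := hsat j; rw [hfj] at this
            simpa [List.get_eq_getElem] using this.symm
          rw [hg]
          refine Strips.Exec.cons ?_ ?_
          · -- precondition of Sum.inr j
            rintro x hx
            rcases hx with hx | hx
            · rcases hx with ⟨p, hp, rfl⟩
              rw [List.get_eq_getElem, hOj] at hp
              exact Or.inl ⟨p, hpre hp, rfl⟩
            · rcases hx with ⟨hj0, rfl⟩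
              refine Or.inr ⟨⟨(j : ℕ) - 1, by omega⟩, ?_, rfl⟩
              have hlt : (⟨(j : ℕ) - 1, by omega⟩ : Fin O.length) < j := by
                simp [Fin.lt_def]; omega
              have := hf hlt
              rw [hfj] at this
              exact this
          · -- recursive step
            have hstate : (P.transform O).applyA
                (Sum.inl '' s ∪ {x | ∃ j', (f j' : ℕ) < k ∧ x = Sum.inr j'})
                (Sum.inr j) =
                Sum.inl '' (P.applyA s π[k]) ∪
                  {x | ∃ j', (f j' : ℕ) < k + 1 ∧ x = Sum.inr j'} := by
              ext x
              cases x with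
              | inl p =>
                  simp [Strips.applyA, Strips.transform, hOj]
              | inr i =>
                  simp only [Strips.applyA, Strips.transform, Set.mem_union,
                    Set.mem_diff, Set.mem_image, Set.mem_insert_iff,
                    Set.mem_setOf_eq]
                  constructor
                  · rintro (⟨(⟨p, _, h⟩ | ⟨j', hj', h⟩), -⟩ | h)
                    · exact absurd h (by simp)
                    · exact Or.inr ⟨j', by omega, h⟩
                    · rcases h with h | ⟨p, _, h⟩
                      · refine Or.inr ⟨j, ?_, h⟩
                        rw [hfj]; exact Nat.lt_succ_self k
                      · exact absurd h (by simp)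
                  · rintro (⟨p, _, h⟩ | ⟨j', hj', h⟩)
                    · exact absurd h (by simp)
                    · rcases Nat.lt_succ_iff_lt_or_eq.mp hj' with h' | h'
                      · exact Or.inl ⟨Or.inr ⟨j', h', h⟩, by simp [h]⟩
                      · have : j' = j := by
                          apply hf.injective
                          rw [hfj]; exact Fin.ext h'
                        subst this
                        exact Or.inr (Or.inl h)
            rw [hstate]
            exact ih (k + 1) (P.applyA s π[k]) t (by omega) htail
        · push_neg at hj
          have hg : π'[k] = Sum.inl (π[k]) := by
            have := hout ⟨k, hkπ⟩ hj
            simpa [List.get_eq_getElem] using this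
          rw [hg]
          refine Strips.Exec.cons ?_ ?_
          · rintro x ⟨p, hp, rfl⟩
            exact Or.inl ⟨p, hpre hp, rfl⟩
          · have hstate : (P.transform O).applyA
                (Sum.inl '' s ∪ {x | ∃ j', (f j' : ℕ) < k ∧ x = Sum.inr j'})
                (Sum.inl (π[k])) =
                Sum.inl '' (P.applyA s π[k]) ∪
                  {x | ∃ j', (f j' : ℕ) < k + 1 ∧ x = Sum.inr j'} := by
              ext x
              cases x with
              | inl p => simp [Strips.applyA, Strips.transform]
              | inr i =>
                  simp only [Strips.applyA, Strips.transform, Set.mem_union,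
                    Set.mem_diff, Set.mem_image, Set.mem_setOf_eq]
                  constructor
                  · rintro (⟨(⟨p, _, h⟩ | ⟨j', hj', h⟩), -⟩ | ⟨p, _, h⟩)
                    · exact absurd h (by simp)
                    · exact Or.inr ⟨j', by omega, h⟩
                    · exact absurd h (by simp)
                  · rintro (⟨p, _, h⟩ | ⟨j', hj', h⟩)
                    · exact absurd h (by simp)
                    · refine Or.inl ⟨Or.inr ⟨j', ?_, h⟩, by simp [h]⟩
                      rcases Nat.lt_succ_iff_lt_or_eq.mp hj' with h' | h'
                      · exact h'
                      · exact absurd (Fin.ext h') (hj j')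
            rw [hstate]
            exact ih (k + 1) (P.applyA s π[k]) t (by omega) htail

end Aux3
section Aux4

variable {F A : Type}

lemma isPlan_proj (P : Strips F A) (O : List A) (G : Set F)
    {ρ : List (A ⊕ Fin O.length)} {H : Set (F ⊕ Fin O.length)}
    (hGH : Sum.inl '' G ⊆ H)
    (h : (P.transform O).IsPlan H ρ) :
    P.IsPlan G (ρ.map (Sum.elim id O.get)) := by
  obtain ⟨t, hexec, hGt⟩ := h
  refine ⟨Sum.inl ⁻¹' t, ?_, ?_⟩
  · have := exec_proj P O hexec
    rwa [show Sum.inl ⁻¹' (P.transform O).I = P.I from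
      Set.preimage_image_eq _ Sum.inl_injective] at this
  · intro p hp
    exact hGt (hGH ⟨p, hp, rfl⟩)

lemma isPlan_lift (P : Strips F A) (O : List A) (G : Set F)
    {ρ : List A} (h : P.IsPlan G ρ) :
    (P.transform O).IsPlan (Sum.inl '' G) (ρ.map Sum.inl) := by
  obtain ⟨t, hexec, hGt⟩ := h
  exact ⟨Sum.inl '' t, exec_lift P O hexec, Set.image_mono hGt⟩

end Aux4
/-- let `T = ⟨P, 𝒢, O⟩` be a plan-recognition theory with `O`
pairwise distinct, `P' = P.transform O` the transformed domain with cost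
`c(o_a) = c(a)`, and `G ∈ 𝒢`.  Let `π` be an action sequence satisfying `O`
under the strictly monotonic function `f` (hypotheses `hf`, `hsat`), and let
`π'` be the corresponding sequence obtained by replacing `a_{f j}` with
`o_{a_{f j}}` (hypotheses `hin`, `hout`).  Then `π` is an optimal plan for
`G` in `P` that satisfies `O` iff `π'` is simultaneously an optimal plan for
the goal `G` in `P'` and an optimal plan for the goal `G' = G ∪ F_o` in
`P'`. -/
theorem optimal_plan_satisfying_obs_iff_transformed_optimal
    {F A : Type} [Finite F] [Finite A]
    (P : Strips F A) (𝒢 : Set (Set F)) (O : List A) (hO : O.Nodup)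
    (c : A → ℝ) (hc : ∀ a, 0 ≤ c a)
    (G : Set F) (hG : G ∈ 𝒢)
    (π : List A) (f : Fin O.length → Fin π.length)
    (hf : StrictMono f) (hsat : ∀ j, π.get (f j) = O.get j)
    (π' : List (A ⊕ Fin O.length)) (hlen : π'.length = π.length)
    (hin : ∀ j : Fin O.length, π'.get (Fin.cast hlen.symm (f j)) = Sum.inr j)
    (hout : ∀ i : Fin π.length, (∀ j, f j ≠ i) →
      π'.get (Fin.cast hlen.symm i) = Sum.inl (π.get i)) :
    (P.IsOptimalPlan c G π ∧ Strips.Satisfies π O) ↔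
      ((P.transform O).IsOptimalPlan (costTransform c O) (Sum.inl '' G) π' ∧
       (P.transform O).IsOptimalPlan (costTransform c O) (goalTransform O G) π') := by
  constructor
  · rintro ⟨⟨⟨t, hexec, hGt⟩, hopt⟩, -⟩
    have hkey := exec_key P O π f hf hsat π' hlen hin hout π.length 0 P.I t
      (by simp) (by simpa using hexec)
    simp only [List.drop_zero] at hkey
    have hstart : (Sum.inl '' P.I ∪
        {x : F ⊕ Fin O.length | ∃ j, (f j : ℕ) < 0 ∧ x = Sum.inr j}) =
        (P.transform O).I := by
      have : {x : F ⊕ Fin O.length | ∃ j, (f j : ℕ) < 0 ∧ x = Sum.inr j} = ∅ := by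
        ext x; simp
      rw [this, Set.union_empty]; rfl
    rw [hstart] at hkey
    have hcost : Strips.planCost (costTransform c O) π' = Strips.planCost c π := by
      rw [cost_proj, map_proj_eq f hsat hlen hin hout]
    have hplan1 : (P.transform O).IsPlan (Sum.inl '' G) π' :=
      ⟨_, hkey, fun x hx => Or.inl (Set.image_mono hGt hx)⟩
    have hplan2 : (P.transform O).IsPlan (goalTransform O G) π' :=
      ⟨_, hkey, Set.union_subset_union_left _ (Set.image_mono hGt)⟩
    have hoptgen : ∀ (H : Set (F ⊕ Fin O.length)), Sum.inl '' G ⊆ H →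
        ∀ ρ, (P.transform O).IsPlan H ρ →
        Strips.planCost (costTransform c O) π' ≤ Strips.planCost (costTransform c O) ρ := by
      intro H hGH ρ hρ
      rw [hcost, cost_proj]
      exact hopt _ (isPlan_proj P O G hGH hρ)
    exact ⟨⟨hplan1, hoptgen _ (subset_refl _)⟩,
      ⟨hplan2, hoptgen _ Set.subset_union_left⟩⟩
  · rintro ⟨⟨_, hopt1⟩, ⟨hplan2, -⟩⟩
    have hmp : π'.map (Sum.elim id O.get) = π := map_proj_eq f hsat hlen hin hout
    have hcost : Strips.planCost (costTransform c O) π' = Strips.planCost c π := by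
      rw [cost_proj, hmp]
    have hπplan : P.IsPlan G π := by
      have := isPlan_proj P O G Set.subset_union_left hplan2
      rwa [hmp] at this
    refine ⟨⟨hπplan, ?_⟩, ⟨f, hf, hsat⟩⟩
    intro ρ hρ
    have := hopt1 _ (isPlan_lift P O G hρ)
    rw [cost_lift] at this
    rw [← hcost]
    exact this
end
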